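/- With L_nice as defined from the typed instance, and α_i = ⌈P_i/(T−s_i)⌉, the inequality L_nice ≤ ∑_{all i} (α_i·s_i + P_i) holds. -/

import Mathlib

open Finset

variable {ι : Type*} [DecidableEq ι]

/-- The set of classes of a given type (types ①–⑧ are indexed by `Fin 8`,
with `0 ↔ ①`, `1 ↔ ②`, `2 ↔ ③`, `3 ↔ ④`, `4 ↔ ⑤`, `5 ↔ ⑥`, `6 ↔ ⑦`, `7 ↔ ⑧`). -/
def typeSet (C : Finset ι) (typ : ι → Fin 8) (k : Fin 8) : Finset ι :=
  C.filter fun i => typ i = k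

/-- `α'_i = ⌊P_i/(T - s_i)⌋` (floor of a real, taken in ℕ). -/
noncomputable def alpha' (T : ℝ) (s P : ι → ℝ) (i : ι) : ℕ :=
  ⌊P i / (T - s i)⌋₊

/-- `α_i = ⌈P_i/(T - s_i)⌉` (ceiling of a real, taken in ℕ). -/
noncomputable def alphaCeil (T : ℝ) (s P : ι → ℝ) (i : ι) : ℕ :=
  ⌈P i / (T - s i)⌉₊

/-- The obligatory load `L_nice` of a nice instance. -/
noncomputable def Lnice (T : ℝ) (C : Finset ι) (s P : ι → ℝ) (typ : ι → Fin 8) : ℝ :=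
  (∑ i ∈ typeSet C typ 0 ∪ typeSet C typ 1, (alpha' T s P i : ℝ) * s i)
    + (∑ i ∈ typeSet C typ 2, 2 * s i)
    + (∑ i ∈ typeSet C typ 3 ∪ typeSet C typ 4 ∪ typeSet C typ 5 ∪ typeSet C typ 6
        ∪ typeSet C typ 7, s i)
    + ∑ i ∈ C, P i

/-- The residual load `r_nice`. -/
noncomputable def rnice (C : Finset ι) (s P : ι → ℝ) (typ : ι → Fin 8)
    (R3 R5 R6 : Finset ι) : ℝ :=
  (∑ i ∈ R3, (2 * s i + P i))
    + ∑ i ∈ R5 ∪ R6 ∪ typeSet C typ 6 ∪ typeSet C typ 7, (s i + P i)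

/-- The machine lower bound `m_nice`. -/
noncomputable def mnice (T : ℝ) (C : Finset ι) (s P : ι → ℝ) (typ : ι → Fin 8)
    (R3 R5 R6 : Finset ι) : ℕ :=
  (∑ i ∈ typeSet C typ 0 ∪ typeSet C typ 1, alpha' T s P i)
    + 3 * ((typeSet C typ 2).card / 2)
    + (typeSet C typ 3).card
    + (typeSet C typ 4).card / 2
    + (typeSet C typ 5).card / 3
    + ⌈rnice C s P typ R3 R5 R6 / T⌉₊

/-- `L_nice ≤ ∑ i (α_i·s_i + P_i)`. -/
theorem stmt_6 (T : ℝ) (hT : 0 < T) (m : ℕ) (hm : 1 ≤ m)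
    (C : Finset ι) (s P : ι → ℝ) (typ : ι → Fin 8)
    (hs : ∀ i ∈ C, 0 ≤ s i ∧ s i < T) (hP : ∀ i ∈ C, 0 < P i)
    (h1 : ∀ i ∈ C, typ i = 0 →
      2 * T / 3 ≤ s i ∧ T ≤ s i + P i ∧ s i + P i ≤ (m : ℝ) * T)
    (h2 : ∀ i ∈ C, typ i = 1 →
      T / 3 ≤ s i ∧ s i < 2 * T / 3 ∧ 2 * T - s i ≤ s i + P i ∧ s i + P i ≤ (m : ℝ) * T)
    (h3 : ∀ i ∈ C, typ i = 2 →
      T / 3 ≤ s i ∧ s i < 2 * T / 3 ∧ 4 * T / 3 < s i + P i ∧ s i + P i < 2 * T - s i)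
    (h4 : ∀ i ∈ C, typ i = 3 →
      T / 3 ≤ s i ∧ s i < 2 * T / 3 ∧ T ≤ s i + P i ∧ s i + P i ≤ 4 * T / 3)
    (h5 : ∀ i ∈ C, typ i = 4 →
      T / 3 ≤ s i ∧ s i < 2 * T / 3 ∧ T / 2 < s i + P i ∧ s i + P i ≤ 2 * T / 3)
    (h6 : ∀ i ∈ C, typ i = 5 →
      T / 3 ≤ s i ∧ s i < 2 * T / 3 ∧ T / 3 < s i + P i ∧ s i + P i ≤ 4 * T / 9)
    (h7 : ∀ i ∈ C, typ i = 6 → 0 ≤ s i ∧ s i < T / 3)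
    (h8 : ∀ i ∈ C, typ i = 7 →
      T / 3 ≤ s i ∧ s i < 2 * T / 3 ∧ 4 * T / 9 < s i + P i ∧ s i + P i ≤ T / 2)
    : Lnice T C s P typ ≤ ∑ i ∈ C, ((alphaCeil T s P i : ℝ) * s i + P i) := by
  classical
  have hdisj : ∀ k l : Fin 8, k ≠ l → Disjoint (typeSet C typ k) (typeSet C typ l) := by
    intro k l hkl
    rw [Finset.disjoint_left]
    intro a ha hb
    rw [typeSet, Finset.mem_filter] at ha hb
    exact hkl (ha.2 ▸ hb.2 ▸ rfl)
  -- generic bound: 1 ≤ α for i ∈ C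
  have halpha1 : ∀ i ∈ C, 1 ≤ alphaCeil T s P i := by
    intro i hiC
    have hsT := (hs i hiC).2
    have hpos : 0 < T - s i := by linarith
    have : 0 < P i / (T - s i) := div_pos (hP i hiC) hpos
    exact Nat.ceil_pos.mpr this
  have hb0 : ∀ i ∈ typeSet C typ 0 ∪ typeSet C typ 1,
      (alpha' T s P i : ℝ) * s i ≤ (alphaCeil T s P i : ℝ) * s i := by
    intro i hi
    have hiC : i ∈ C := by
      rcases Finset.mem_union.mp hi with h | h <;>
        exact (Finset.mem_filter.mp h).1
    have hs0 := (hs i hiC).1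
    apply mul_le_mul_of_nonneg_right _ hs0
    exact_mod_cast Nat.floor_le_ceil _
  have hb2 : ∀ i ∈ typeSet C typ 2, 2 * s i ≤ (alphaCeil T s P i : ℝ) * s i := by
    intro i hi
    obtain ⟨hiC, hk⟩ := Finset.mem_filter.mp hi
    obtain ⟨h31, h32, h33, _⟩ := h3 i hiC hk
    have hsT := (hs i hiC).2
    have hs0 := (hs i hiC).1
    have hpos : 0 < T - s i := by linarith
    have hx : (1:ℝ) < P i / (T - s i) := by
      rw [lt_div_iff₀ hpos]; linarith
    have h2le : 2 ≤ alphaCeil T s P i := Nat.lt_ceil.mpr (by exact_mod_cast hx)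
    apply mul_le_mul_of_nonneg_right _ hs0
    exact_mod_cast h2le
  have hbrest : ∀ i ∈ typeSet C typ 3 ∪ typeSet C typ 4 ∪ typeSet C typ 5
      ∪ typeSet C typ 6 ∪ typeSet C typ 7,
      s i ≤ (alphaCeil T s P i : ℝ) * s i := by
    intro i hi
    have hiC : i ∈ C := by
      simp only [Finset.mem_union] at hi
      rcases hi with ((((h|h)|h)|h)|h) <;> exact (Finset.mem_filter.mp h).1
    have hs0 := (hs i hiC).1
    have h1le : (1:ℝ) ≤ (alphaCeil T s P i : ℝ) := by exact_mod_cast halpha1 i hiC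
    nlinarith
  -- partition the RHS sum into fibers
  have hpart : ∑ i ∈ C, (alphaCeil T s P i : ℝ) * s i
      = ∑ k : Fin 8, ∑ i ∈ typeSet C typ k, (alphaCeil T s P i : ℝ) * s i := by
    rw [← Finset.sum_fiberwise C typ (fun i => (alphaCeil T s P i : ℝ) * s i)]
    rfl
  have hnn : ∀ k : Fin 8, 0 ≤ ∑ i ∈ typeSet C typ k, (alphaCeil T s P i : ℝ) * s i := by
    intro k
    apply Finset.sum_nonneg
    intro i hi
    have hiC : i ∈ C := (Finset.mem_filter.mp hi).1
    have := (hs i hiC).1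
    positivity
  have d01 : Disjoint (typeSet C typ 0) (typeSet C typ 1) := hdisj 0 1 (by decide)
  have d34 : Disjoint (typeSet C typ 3) (typeSet C typ 4) := hdisj 3 4 (by decide)
  have d345 : Disjoint (typeSet C typ 3 ∪ typeSet C typ 4) (typeSet C typ 5) :=
    Finset.disjoint_union_left.mpr ⟨hdisj 3 5 (by decide), hdisj 4 5 (by decide)⟩
  have d3456 : Disjoint (typeSet C typ 3 ∪ typeSet C typ 4 ∪ typeSet C typ 5)
      (typeSet C typ 6) :=
    Finset.disjoint_union_left.mpr ⟨Finset.disjoint_union_left.mpr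
      ⟨hdisj 3 6 (by decide), hdisj 4 6 (by decide)⟩, hdisj 5 6 (by decide)⟩
  have d34567 : Disjoint (typeSet C typ 3 ∪ typeSet C typ 4 ∪ typeSet C typ 5
      ∪ typeSet C typ 6) (typeSet C typ 7) :=
    Finset.disjoint_union_left.mpr ⟨Finset.disjoint_union_left.mpr
      ⟨Finset.disjoint_union_left.mpr ⟨hdisj 3 7 (by decide), hdisj 4 7 (by decide)⟩,
        hdisj 5 7 (by decide)⟩, hdisj 6 7 (by decide)⟩
  have e01 : ∑ i ∈ typeSet C typ 0 ∪ typeSet C typ 1,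
      (alphaCeil T s P i : ℝ) * s i
      = (∑ i ∈ typeSet C typ 0, (alphaCeil T s P i : ℝ) * s i)
        + ∑ i ∈ typeSet C typ 1, (alphaCeil T s P i : ℝ) * s i :=
    Finset.sum_union d01
  have erest : ∑ i ∈ typeSet C typ 3 ∪ typeSet C typ 4 ∪ typeSet C typ 5
      ∪ typeSet C typ 6 ∪ typeSet C typ 7, (alphaCeil T s P i : ℝ) * s i
      = (∑ i ∈ typeSet C typ 3, (alphaCeil T s P i : ℝ) * s i)
        + (∑ i ∈ typeSet C typ 4, (alphaCeil T s P i : ℝ) * s i)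
        + (∑ i ∈ typeSet C typ 5, (alphaCeil T s P i : ℝ) * s i)
        + (∑ i ∈ typeSet C typ 6, (alphaCeil T s P i : ℝ) * s i)
        + ∑ i ∈ typeSet C typ 7, (alphaCeil T s P i : ℝ) * s i := by
    rw [Finset.sum_union d34567, Finset.sum_union d3456, Finset.sum_union d345,
      Finset.sum_union d34]
  have L0 : ∑ i ∈ typeSet C typ 0 ∪ typeSet C typ 1, (alpha' T s P i : ℝ) * s i
      ≤ ∑ i ∈ typeSet C typ 0 ∪ typeSet C typ 1, (alphaCeil T s P i : ℝ) * s i :=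
    Finset.sum_le_sum hb0
  have L2 : ∑ i ∈ typeSet C typ 2, 2 * s i
      ≤ ∑ i ∈ typeSet C typ 2, (alphaCeil T s P i : ℝ) * s i :=
    Finset.sum_le_sum hb2
  have Lr : ∑ i ∈ typeSet C typ 3 ∪ typeSet C typ 4 ∪ typeSet C typ 5
      ∪ typeSet C typ 6 ∪ typeSet C typ 7, s i
      ≤ ∑ i ∈ typeSet C typ 3 ∪ typeSet C typ 4 ∪ typeSet C typ 5
        ∪ typeSet C typ 6 ∪ typeSet C typ 7, (alphaCeil T s P i : ℝ) * s i :=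
    Finset.sum_le_sum hbrest
  unfold Lnice
  rw [Finset.sum_add_distrib]
  refine add_le_add ?_ le_rfl
  rw [hpart, Fin.sum_univ_eight]
  rw [e01] at L0
  rw [erest] at Lr
  have := hnn 0; have := hnn 1; have := hnn 2; have := hnn 3
  have := hnn 4; have := hnn 5; have := hnn 6; have := hnn 7
  linarith
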